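/- Let l, m, k₁, k₂ be integers with d = gcd(l,m) dividing k₁ and k₂, and suppose k₁·m₁ᵖ = ε·k₂·l₁ᵖ for some integer p > 0 and ε = ±1, where l = l₁d, m = m₁d. Then in the Baumslag–Solitar group H(l,m) = ⟨a, b ∣ b⁻¹aˡb = aᵐ⟩ the relation b⁻ᵖ a^(ε·k₁) bᵖ = a^(k₂) holds. -/

import Mathlib

/-- The Baumslag–Solitar relator `b⁻¹aˡba⁻ᵐ` in the free group on `a` (= `of true`)
and `b` (= `of false`). -/
def BSrel (l m : ℤ) : FreeGroup Bool :=
  (FreeGroup.of false)⁻¹ * (FreeGroup.of true) ^ l * (FreeGroup.of false) *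
    (FreeGroup.of true) ^ (-m)

/-- The Baumslag–Solitar group `H(l,m) = ⟨a, b ∣ b⁻¹aˡb = aᵐ⟩`. -/
abbrev HH (l m : ℤ) := PresentedGroup ({BSrel l m} : Set (FreeGroup Bool))

lemma bs_rel (l m : ℤ) :
    (PresentedGroup.of false : HH l m)⁻¹ * (PresentedGroup.of true : HH l m) ^ l *
      (PresentedGroup.of false : HH l m) = (PresentedGroup.of true : HH l m) ^ m := by
  have h : (QuotientGroup.mk (BSrel l m) : HH l m) = 1 :=
    (QuotientGroup.eq_one_iff _).2 (Subgroup.subset_normalClosure (Set.mem_singleton _))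
  have h2 : (PresentedGroup.of false : HH l m)⁻¹ * (PresentedGroup.of true : HH l m) ^ l *
      (PresentedGroup.of false : HH l m) * (PresentedGroup.of true : HH l m) ^ (-m) = 1 := by
    have h3 : PresentedGroup.mk ({BSrel l m} : Set (FreeGroup Bool))
        ((FreeGroup.of false)⁻¹ * FreeGroup.of true ^ l * FreeGroup.of false *
          FreeGroup.of true ^ (-m)) = 1 := h
    rw [map_mul, map_mul, map_mul, map_inv, map_zpow, map_zpow] at h3
    exact h3
  rw [zpow_neg] at h2
  exact mul_inv_eq_one.mp h2

lemma bs_conj (l m : ℤ) (c : ℤ) :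
    (PresentedGroup.of false : HH l m)⁻¹ * (PresentedGroup.of true : HH l m) ^ (c * l) *
      (PresentedGroup.of false : HH l m) = (PresentedGroup.of true : HH l m) ^ (c * m) := by
  have h := bs_rel l m
  have key : ((PresentedGroup.of false : HH l m)⁻¹ * (PresentedGroup.of true : HH l m) ^ l *
      (PresentedGroup.of false : HH l m)) ^ c =
      (PresentedGroup.of false : HH l m)⁻¹ * ((PresentedGroup.of true : HH l m) ^ l) ^ c *
      (PresentedGroup.of false : HH l m) := by
    simpa using conj_zpow (a := (PresentedGroup.of false : HH l m)⁻¹)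
      (b := (PresentedGroup.of true : HH l m) ^ l) (i := c)
  calc (PresentedGroup.of false : HH l m)⁻¹ * (PresentedGroup.of true : HH l m) ^ (c * l) *
      (PresentedGroup.of false : HH l m)
      = (PresentedGroup.of false : HH l m)⁻¹ * ((PresentedGroup.of true : HH l m) ^ l) ^ c *
        (PresentedGroup.of false : HH l m) := by rw [mul_comm c l, zpow_mul]
    _ = ((PresentedGroup.of false : HH l m)⁻¹ * (PresentedGroup.of true : HH l m) ^ l *
        (PresentedGroup.of false : HH l m)) ^ c := key.symm
    _ = ((PresentedGroup.of true : HH l m) ^ m) ^ c := by rw [h]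
    _ = (PresentedGroup.of true : HH l m) ^ (c * m) := by rw [← zpow_mul, mul_comm]

lemma bs_step (l m l₁ m₁ d : ℤ) (hl : l = l₁ * d) (hm : m = m₁ * d) :
    ∀ (i : ℕ) (c : ℤ),
      ((PresentedGroup.of false : HH l m))⁻¹ ^ i *
        (PresentedGroup.of true : HH l m) ^ (c * l₁ ^ i * d) *
        (PresentedGroup.of false : HH l m) ^ i =
        (PresentedGroup.of true : HH l m) ^ (c * m₁ ^ i * d) := by
  intro i
  induction i with
  | zero => intro c; simp
  | succ i ih =>
    intro c
    have h1 : (PresentedGroup.of false : HH l m)⁻¹ *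
        (PresentedGroup.of true : HH l m) ^ (c * l₁ ^ (i + 1) * d) *
        (PresentedGroup.of false : HH l m) =
        (PresentedGroup.of true : HH l m) ^ ((c * m₁) * l₁ ^ i * d) := by
      have h2 := bs_conj l m (c * l₁ ^ i)
      rw [show c * l₁ ^ (i + 1) * d = c * l₁ ^ i * l by rw [hl]; ring, h2,
        show c * l₁ ^ i * m = c * m₁ * l₁ ^ i * d by rw [hm]; ring]
    calc ((PresentedGroup.of false : HH l m))⁻¹ ^ (i + 1) *
        (PresentedGroup.of true : HH l m) ^ (c * l₁ ^ (i + 1) * d) *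
        (PresentedGroup.of false : HH l m) ^ (i + 1)
        = ((PresentedGroup.of false : HH l m))⁻¹ ^ i *
          ((PresentedGroup.of false : HH l m)⁻¹ *
            (PresentedGroup.of true : HH l m) ^ (c * l₁ ^ (i + 1) * d) *
            (PresentedGroup.of false : HH l m)) *
          (PresentedGroup.of false : HH l m) ^ i := by
          rw [pow_succ, pow_succ']; group
      _ = ((PresentedGroup.of false : HH l m))⁻¹ ^ i *
          (PresentedGroup.of true : HH l m) ^ ((c * m₁) * l₁ ^ i * d) *
          (PresentedGroup.of false : HH l m) ^ i := by rw [h1]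
      _ = (PresentedGroup.of true : HH l m) ^ ((c * m₁) * m₁ ^ i * d) := ih (c * m₁)
      _ = (PresentedGroup.of true : HH l m) ^ (c * m₁ ^ (i + 1) * d) := by congr 1; ring

theorem stmt_9 (l m k₁ k₂ l₁ m₁ d ε : ℤ) (hd : d = Int.gcd l m)
    (hl : l = l₁ * d) (hm : m = m₁ * d)
    (hk₁ : d ∣ k₁) (hk₂ : d ∣ k₂) (hε : ε = 1 ∨ ε = -1)
    (p : ℕ) (hp : 0 < p) (he : k₁ * m₁ ^ p = ε * k₂ * l₁ ^ p) :
    ((PresentedGroup.of false : HH l m))⁻¹ ^ p *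
        (PresentedGroup.of true : HH l m) ^ (ε * k₁) *
        (PresentedGroup.of false : HH l m) ^ p =
      (PresentedGroup.of true : HH l m) ^ k₂ := by
  have hε2 : ε * ε = 1 := by rcases hε with h | h <;> simp [h]
  by_cases hd0 : d = 0
  · have h1 : k₁ = 0 := by simpa [hd0] using hk₁
    have h2 : k₂ = 0 := by simpa [hd0] using hk₂
    simp [h1, h2]
  obtain ⟨k₁', rfl⟩ := hk₁
  obtain ⟨k₂', rfl⟩ := hk₂
  by_cases hl0 : l₁ = 0
  · have hm0 : m₁ ≠ 0 := by
      rintro rfl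
      apply hd0
      rw [hd, hl, hm, hl0]; simp
    have hk10 : k₁' = 0 := by
      have h0 : d * k₁' * m₁ ^ p = 0 := by
        rw [he, hl0, zero_pow hp.ne']; ring
      rcases mul_eq_zero.mp h0 with h | h
      · rcases mul_eq_zero.mp h with h | h
        · exact absurd h hd0
        · exact h
      · exact absurd (pow_eq_zero_iff hp.ne' |>.mp h) hm0
    have hrel := bs_rel l m
    have hl' : l = 0 := by rw [hl, hl0]; ring
    have ham : (PresentedGroup.of true : HH l m) ^ m = 1 := by
      rw [← hrel, hl']; simp
    have hmd : m ∣ d := by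
      rw [hd, hl', Int.gcd_zero_left]
      exact Int.dvd_natAbs.mpr dvd_rfl
    obtain ⟨t, ht⟩ := hmd
    have hone : (PresentedGroup.of true : HH l m) ^ (d * k₂') = 1 := by
      rw [ht, mul_assoc, zpow_mul, ham, one_zpow]
    rw [hk10, hone]; simp
  · have hdpos : (0:ℤ) < d := lt_of_le_of_ne (hd ▸ Int.natCast_nonneg _) (Ne.symm hd0)
    have hcop : IsCoprime l₁ m₁ := by
      have h1 : Int.gcd l m = Int.gcd l₁ m₁ * d.natAbs := by
        rw [hl, hm, Int.gcd_mul_right]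
      have h2 : (d.natAbs : ℤ) = d := Int.natAbs_of_nonneg hdpos.le
      have h3 : d = (Int.gcd l₁ m₁ : ℤ) * d := by
        calc d = ((Int.gcd l m : ℕ) : ℤ) := hd
          _ = ((Int.gcd l₁ m₁ * d.natAbs : ℕ) : ℤ) := by rw [h1]
          _ = (Int.gcd l₁ m₁ : ℤ) * d := by push_cast [h2]; ring
      have h4 : (Int.gcd l₁ m₁ : ℤ) = 1 := by
        have h5 : (1:ℤ) * d = (Int.gcd l₁ m₁ : ℤ) * d := by linarith
        exact (mul_right_cancel₀ hd0 h5).symm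
      rw [Int.isCoprime_iff_gcd_eq_one]
      exact_mod_cast h4
    have he' : k₁' * m₁ ^ p = ε * k₂' * l₁ ^ p := by
      have h5 : d * (k₁' * m₁ ^ p) = d * (ε * k₂' * l₁ ^ p) := by linear_combination he
      exact mul_left_cancel₀ hd0 h5
    have hdvd : l₁ ^ p ∣ k₁' := by
      refine (IsCoprime.pow hcop (n := p) (m := p)).dvd_of_dvd_mul_right ?_
      exact ⟨ε * k₂', by linear_combination he'⟩
    obtain ⟨s, hs⟩ := hdvd
    have hk2' : k₂' = ε * s * m₁ ^ p := by
      have hlp : l₁ ^ p ≠ 0 := pow_ne_zero p hl0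
      have h6 : l₁ ^ p * (s * m₁ ^ p) = l₁ ^ p * (ε * k₂') := by
        rw [hs] at he'; linear_combination he'
      have h4 := mul_left_cancel₀ hlp h6
      linear_combination -ε * h4 - k₂' * hε2
    have key := bs_step l m l₁ m₁ d hl hm p (ε * s)
    rw [show ε * (d * k₁') = ε * s * l₁ ^ p * d by rw [hs]; ring, key,
      show ε * s * m₁ ^ p * d = d * k₂' by rw [hk2']; ring]
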